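/- For a real number β, the distance from 3ⁿβ to the nearest integer tends to 0 as n → ∞ if and only if β ∈ ℤ[1/3], i.e. if and only if β = k/3ᵐ for some integer k and natural number m. -/

import Mathlib

lemma inf_abs_eq_round (x : ℝ) : (⨅ p : ℤ, |x - (p : ℝ)|) = |x - round x| := by
  apply le_antisymm
  · exact ciInf_le ⟨0, fun y ⟨p, hp⟩ => hp ▸ abs_nonneg _⟩ (round x)
  · exact le_ciInf fun p => round_le x p

/-- For a real number `β`, the distance from `3ⁿβ` to the nearest integer tends to `0` as
`n → ∞` if and only if `β ∈ ℤ[1/3]`, i.e. iff `β = k/3ᵐ` for some integer `k` and natural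
number `m`. -/
theorem stmt6 (β : ℝ) :
    Filter.Tendsto (fun n : ℕ => ⨅ p : ℤ, |3 ^ n * β - (p : ℝ)|) Filter.atTop (nhds 0) ↔
      ∃ (k : ℤ) (m : ℕ), β = (k : ℝ) / 3 ^ m := by
  simp only [inf_abs_eq_round]
  constructor
  · intro h
    -- d n := round (3^{n+1} β) - 3 * round (3^n β) tends to 0 and is an integer
    have hd : Filter.Tendsto
        (fun n : ℕ => 3 * (3 ^ n * β - (round (3 ^ n * β) : ℝ))
          - (3 ^ (n + 1) * β - (round (3 ^ (n + 1) * β) : ℝ))) Filter.atTop (nhds 0) := by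
      have h1 := (h.const_mul 3).sub (h.comp (Filter.tendsto_add_atTop_nat 1))
      simp only [mul_zero, sub_zero] at h1
      have h2 : Filter.Tendsto
          (fun n : ℕ => 3 * |3 ^ n * β - (round (3 ^ n * β) : ℝ)|
            + |3 ^ (n + 1) * β - (round (3 ^ (n + 1) * β) : ℝ)|) Filter.atTop (nhds 0) := by
        have := (h.const_mul 3).add (h.comp (Filter.tendsto_add_atTop_nat 1))
        simpa using this
      apply squeeze_zero_norm _ h2
      intro n
      simp only [Real.norm_eq_abs]
      calc |3 * (3 ^ n * β - (round (3 ^ n * β) : ℝ))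
            - (3 ^ (n + 1) * β - (round (3 ^ (n + 1) * β) : ℝ))|
          ≤ |3 * (3 ^ n * β - (round (3 ^ n * β) : ℝ))|
            + |3 ^ (n + 1) * β - (round (3 ^ (n + 1) * β) : ℝ)| := abs_sub _ _
        _ = 3 * |3 ^ n * β - (round (3 ^ n * β) : ℝ)|
            + |3 ^ (n + 1) * β - (round (3 ^ (n + 1) * β) : ℝ)| := by
            rw [abs_mul]; norm_num
    have hev : ∀ᶠ n in Filter.atTop,
        round (3 ^ (n + 1) * β) = 3 * round (3 ^ n * β) := by
      have := hd.eventually (eventually_abs_sub_lt 0 (by norm_num : (0:ℝ) < 1/2))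
      filter_upwards [this] with n hn
      have key : 3 * (3 ^ n * β - (round (3 ^ n * β) : ℝ))
          - (3 ^ (n + 1) * β - (round (3 ^ (n + 1) * β) : ℝ))
          = ((round (3 ^ (n + 1) * β) - 3 * round (3 ^ n * β) : ℤ) : ℝ) := by
        push_cast
        rw [pow_succ]
        ring
      rw [sub_zero, key] at hn
      have hlt : |round (3 ^ (n + 1) * β) - 3 * round (3 ^ n * β)| < 1 := by
        rw [← Int.cast_abs] at hn
        exact_mod_cast hn.trans_le (by norm_num : (1:ℝ)/2 ≤ 1)
      have := abs_lt.mp hlt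
      omega
    obtain ⟨N, hN⟩ := Filter.eventually_atTop.mp hev
    -- round (3^{N+j} β) = 3^j * round (3^N β)
    have hround : ∀ j : ℕ, round (3 ^ (N + j) * β) = 3 ^ j * round (3 ^ N * β) := by
      intro j
      induction j with
      | zero => simp
      | succ j ih =>
        have := hN (N + j) (Nat.le_add_right N j)
        rw [← Nat.add_assoc] at *
        rw [this, ih]; ring
    refine ⟨round (3 ^ N * β), N, ?_⟩
    -- |β - round(3^N β)/3^N| ≤ |ε_{N+j}| for all j, RHS → 0
    have key : ∀ j : ℕ, |β - (round (3 ^ N * β) : ℝ) / 3 ^ N|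
        ≤ |3 ^ (N + j) * β - (round (3 ^ (N + j) * β) : ℝ)| := by
      intro j
      have h3 : (0:ℝ) < 3 ^ (N + j) := by positivity
      have : β - (round (3 ^ N * β) : ℝ) / 3 ^ N
          = (3 ^ (N + j) * β - (round (3 ^ (N + j) * β) : ℝ)) / 3 ^ (N + j) := by
        rw [hround j]
        field_simp
        rw [pow_add]
        push_cast
        ring
      rw [this, abs_div, abs_of_pos h3]
      have h1 : (1:ℝ) ≤ 3 ^ (N + j) := one_le_pow₀ (by norm_num)
      calc |3 ^ (N + j) * β - (round (3 ^ (N + j) * β) : ℝ)| / 3 ^ (N + j)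
          ≤ |3 ^ (N + j) * β - (round (3 ^ (N + j) * β) : ℝ)| / 1 :=
          div_le_div_of_nonneg_left (abs_nonneg _) (by norm_num) h1
        _ = _ := by rw [div_one]
    have hzero : |β - (round (3 ^ N * β) : ℝ) / 3 ^ N| ≤ 0 := by
      have htend : Filter.Tendsto
          (fun j : ℕ => |3 ^ (N + j) * β - (round (3 ^ (N + j) * β) : ℝ)|)
          Filter.atTop (nhds 0) := by
        have htend := h.comp (Filter.tendsto_add_atTop_nat N)
        simp only [Function.comp_def] at htend
        exact htend.congr fun j => by simp [Function.comp, Nat.add_comm]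
      exact ge_of_tendsto htend (Filter.Eventually.of_forall key)
    have := abs_nonneg (β - (round (3 ^ N * β) : ℝ) / 3 ^ N)
    have habs : |β - (round (3 ^ N * β) : ℝ) / 3 ^ N| = 0 := le_antisymm hzero this
    have := abs_eq_zero.mp habs
    linarith [sub_eq_zero.mp this]
  · rintro ⟨k, m, rfl⟩
    apply Filter.Tendsto.congr' _ tendsto_const_nhds
    filter_upwards [Filter.eventually_ge_atTop m] with n hn
    have : (3:ℝ) ^ n * ((k:ℝ) / 3 ^ m) = ((3 ^ (n - m) * k : ℤ) : ℝ) := by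
      push_cast
      rw [← pow_sub_mul_pow (3:ℝ) hn]
      field_simp
    rw [this, round_intCast]
    simp
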